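/- Let ζ ∈ ℕ^r be weakly increasing and μ ∈ ℕ^{r−1} weakly increasing such that ζ/μ is a ribbon (μ padded with an initial 0 part). Then Σ_η ψ^v(ζ/η) · ψ^h(η/μ) = θ(ζ/μ), the sum running over all weakly increasing η ∈ ℕ^r such that ζ/η is a vertical strip and η/μ is a horizontal strip, where in ψ^h the variable x stands for x_r. -/

import Mathlib

open scoped BigOperators

/-! ### Polynomial ring in two families of variables `x₁, x₂, …` and `y₁, y₂, …`.

`Rpoly` is the ring of polynomials with integer coefficients in the variables
`xP i` (the `x`-variables, indexed by `Sum.inl`) and `yP j` (the `y`-variables,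
indexed by `Sum.inr`).  Throughout, variables are indexed starting from `1`. -/

abbrev Rpoly : Type := MvPolynomial (ℕ ⊕ ℕ) ℤ

noncomputable def xP (i : ℕ) : Rpoly := MvPolynomial.X (Sum.inl i)
noncomputable def yP (i : ℕ) : Rpoly := MvPolynomial.X (Sum.inr i)

/-! ### Divided differences on `Rpoly`.

`ddP i` is the Newton divided difference `∂ᵢ : f ↦ (f - fˢⁱ)/(xᵢ - xᵢ₊₁)`,
implemented by its (exact) action on monomials:
`∂ᵢ (xᵢ^a xᵢ₊₁^b) = Σ_{j=b}^{a-1} xᵢ^j xᵢ₊₁^{a+b-1-j}` for `a ≥ b`,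
and the antisymmetric counterpart when `a < b`. -/

noncomputable def ddMon (i : ℕ) (m : (ℕ ⊕ ℕ) →₀ ℕ) : Rpoly :=
  let a := m (Sum.inl i)
  let b := m (Sum.inl (i + 1))
  if b ≤ a then
    ∑ j ∈ Finset.Ico b a,
      MvPolynomial.monomial
        (Finsupp.update (Finsupp.update m (Sum.inl i) j) (Sum.inl (i + 1)) (a + b - 1 - j)) 1
  else
    - ∑ j ∈ Finset.Ico a b,
      MvPolynomial.monomial
        (Finsupp.update (Finsupp.update m (Sum.inl i) j) (Sum.inl (i + 1)) (a + b - 1 - j)) 1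

noncomputable def ddP (i : ℕ) (f : Rpoly) : Rpoly :=
  ∑ m ∈ f.support, MvPolynomial.coeff m f • ddMon i m

/-- `∂_σ` along a word `[i₁, …, i_N]` is `∂_{i₁} ∘ ⋯ ∘ ∂_{i_N}`. -/
noncomputable def ddWord (w : List ℕ) (f : Rpoly) : Rpoly := w.foldr ddP f

/-! ### Schubert polynomials, indexed by a permutation given as a list
`[σ 1, …, σ n]` of the values of a permutation of `{1, …, n}`. -/

/-- The code of a permutation list: `c i = #{j > i : σ_j < σ_i}` (positions 0-based). -/
def codeOf (l : List ℕ) (i : ℕ) : ℕ :=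
  ((l.drop (i + 1)).filter (fun a => a < l.getD i 0)).length

/-- The dominant Schubert polynomial `Y_v = Π_i Π_{j=1}^{v_i} (x_i - y_j)`
attached to an exponent list `v`. -/
noncomputable def YDomP (v : List ℕ) : Rpoly :=
  ∏ i ∈ Finset.range v.length, ∏ j ∈ Finset.range (v.getD i 0), (xP (i + 1) - yP (j + 1))

/-- The dominant polynomial attached to a (dominant) permutation list via its code. -/
noncomputable def domP (l : List ℕ) : Rpoly :=
  YDomP ((List.range l.length).map (codeOf l))

/-- First ascent position (0-based) of a list. -/
def firstAscent (l : List ℕ) : Option ℕ :=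
  (List.range (l.length - 1)).find? (fun i => l.getD i 0 < l.getD (i + 1) 0)

/-- First descent position (0-based) of a list. -/
def firstDescent (l : List ℕ) : Option ℕ :=
  (List.range (l.length - 1)).find? (fun i => l.getD (i + 1) 0 < l.getD i 0)

/-- Exchange the entries at positions `i`, `i+1` of a list. -/
def swapPos (l : List ℕ) (i : ℕ) : List ℕ :=
  (l.set i (l.getD (i + 1) 0)).set (i + 1) (l.getD i 0)

/-- Schubert polynomials via the recursion `X_σ = ∂_i X_{σ sᵢ}` whenever
`σ_i < σ_{i+1}` (so that lengths add), starting from the dominant case; the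
first argument is a fuel parameter. -/
noncomputable def SchubAux : ℕ → List ℕ → Rpoly
  | 0, l => domP l
  | fuel + 1, l =>
    match firstAscent l with
    | none => domP l
    | some i => ddP (i + 1) (SchubAux fuel (swapPos l i))

/-- The Schubert polynomial `X_σ(x, y)` of a permutation list `σ = [σ 1, …, σ n]`. -/
noncomputable def SchubP (l : List ℕ) : Rpoly := SchubAux (l.length * l.length) l

/-- A reduced word for the permutation given by a list, obtained by repeatedly
exchanging the first descent: if `i` is a descent of `σ` then
`word σ = word (σ sᵢ) ++ [i]`. -/
def sortWord : ℕ → List ℕ → List ℕ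
  | 0, _ => []
  | fuel + 1, l =>
    match firstDescent l with
    | none => []
    | some i => sortWord fuel (swapPos l i) ++ [i + 1]

/-- The standard reduced word `s₁ (s₂ s₁) (s₃ s₂ s₁) ⋯ (s_{r-1} ⋯ s₁)` of the
longest element `ω_r` of the symmetric group `S_r`. -/
def omegaWord (r : ℕ) : List ℕ :=
  (List.range (r - 1)).flatMap (fun k => (List.range (k + 1)).map (fun j => k + 1 - j))

/-- For weakly increasing `ν ∈ ℕ^r`, the partition `λ = (ν_r + r - 1, …, ν_1)`. -/
def lamOf (ν : List ℕ) : List ℕ :=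
  ν.reverse.mapIdx (fun i a => a + (ν.length - 1 - i))

/-- For a weakly increasing `ν ∈ ℕ^r`, the (Graßmannian) Schubert polynomial
`Y_ν := ∂_{ω_r} Y_λ` with `λ = (ν_r + r - 1, …, ν_1)`. -/
noncomputable def YGr (ν : List ℕ) : Rpoly := ddWord (omegaWord ν.length) (YDomP (lamOf ν))

/-- Evaluation of a polynomial of `Rpoly` at points `x i`, `y j` of a commutative ring. -/
noncomputable def evalP {K : Type*} [CommRing K] (x y : ℕ → K) (f : Rpoly) : K :=
  MvPolynomial.aeval (Sum.elim x y) f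

/-! ### Columns, staircases and their partition functions. -/

/-- A column: a strictly decreasing list of positive integers. -/
def IsCol (u : List ℕ) : Prop := u.Chain' (· > ·) ∧ ∀ a ∈ u, 0 < a

/-- Rows weakly increase: reading rows from the bottom (columns are bottom-aligned),
the left neighbour of the entry of `next` at 0-based position `p` (from the top)
is the entry of `prev` at position `p+1`. -/
def RowCond (prev next : List ℕ) : Prop :=
  ∀ p, p < next.length → prev.getD (p + 1) 0 ≤ next.getD p 0

/-- Diagonals weakly decrease: the up-left neighbour of the entry of `next` at
0-based position `p` is the entry of `prev` at position `p`. -/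
def DiagCond (prev next : List ℕ) : Prop :=
  ∀ p, p < next.length → next.getD p 0 ≤ prev.getD p 0

/-- A staircase: a nonempty sequence of columns of lengths `k, k-1, …, k-r`,
with weakly increasing rows and weakly decreasing diagonals. -/
def IsStaircase (t : List (List ℕ)) : Prop :=
  t ≠ [] ∧
  (∀ i, i < t.length → (t.getD i []).length + i = (t.getD 0 []).length) ∧
  (∀ c ∈ t, IsCol c) ∧
  (∀ i, i + 1 < t.length →
    RowCond (t.getD i []) (t.getD (i + 1) []) ∧ DiagCond (t.getD i []) (t.getD (i + 1) []))

section Weights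

variable {K : Type*} [Field K]

/-- The weight of an entry `b` whose left neighbour is `left` and whose up-left
neighbour is `upleft`, the column carrying the variable value `xv`:
`xv/y_b - 1` if `left = b`, `xv/y_b` if `left < b < upleft`, and `1` otherwise. -/
noncomputable def entryW (xv : K) (y : ℕ → K) (b left upleft : ℕ) : K :=
  if left = b then xv / y b - 1
  else if left < b ∧ b < upleft then xv / y b
  else 1

/-- The product of the weights of the entries of the column `next`, whose left
neighbour column is `prev` (one entry longer). -/
noncomputable def colW (xv : K) (y : ℕ → K) (prev next : List ℕ) : K :=
  ∏ p ∈ Finset.range next.length,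
    entryW xv y (next.getD p 0) (prev.getD (p + 1) 0) (prev.getD p 0)

/-- The weight of a staircase: the `m`-th column after the first carries the
variable `x m`. -/
noncomputable def stairW (x y : ℕ → K) (t : List (List ℕ)) : K :=
  ∏ m ∈ Finset.range (t.length - 1), colW (x (m + 1)) y (t.getD m []) (t.getD (m + 1) [])

/-- The partition function `F(u, v)`: the sum of the weights of all staircases
with first column `u` and last column `v`. -/
noncomputable def Fpart (u v : List ℕ) (x y : ℕ → K) : K :=
  ∑ᶠ t ∈ {t : List (List ℕ) | IsStaircase t ∧ t.headD [] = u ∧ t.getLastD [] = v},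
    stairW x y t

/-- `x^{ρ_r} = x₁^{r-1} x₂^{r-2} ⋯ x_r^0`. -/
noncomputable def xRho (r : ℕ) (x : ℕ → K) : K :=
  ∏ i ∈ Finset.range r, (x (i + 1)) ^ (r - 1 - i)

/-- `Π_i y_i^{α_i}` for an exponent list `α`. -/
noncomputable def yPowL (y : ℕ → K) (α : List ℕ) : K :=
  ∏ i ∈ Finset.range α.length, (y (i + 1)) ^ (α.getD i 0)

/-- `y^{⟨u⟩} = Π_m y_m^{⟨u⟩_m}` where `⟨u⟩_m` is the level of the value `m`. -/
noncomputable def yLev (u : List ℕ) (y : ℕ → K) : K :=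
  ∏ m ∈ Finset.range (u.foldr max 0), (y (m + 1)) ^ ((u.filter (fun a => m + 1 < a)).length)

end Weights

/-- The column `[n, n-1, …, 1]`. -/
def colN (n : ℕ) : List ℕ := (List.range n).reverse.map (· + 1)

/-- The list `[1, 2, …, n]`. -/
def oneTo (n : ℕ) : List ℕ := (List.range n).map (· + 1)

/-- The increasing complement of `u` in `{1, …, n}`. -/
def compl (n : ℕ) (u : List ℕ) : List ℕ := (oneTo n).filter (fun a => a ∉ u)

/-- The list `ρ_r = [r-1, r-2, …, 1, 0]`. -/
def rhoList (r : ℕ) : List ℕ := (List.range r).map (fun i => r - 1 - i)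

/-- `p(u, n) = [ũ₁ - 1, ũ₂ - 2, …, ũ_k - k]` where `ũ` is the increasing
complement of `u` in `{1, …, n}`. -/
def pSeq (n : ℕ) (u : List ℕ) : List ℕ := (compl n u).mapIdx (fun i a => a - (i + 1))

/-- Action of a permutation `w ∈ S_r` on the variables `x₁, …, x_r` of an assignment. -/
def permuteVars {α : Type*} {r : ℕ} (w : Equiv.Perm (Fin r)) (x : ℕ → α) : ℕ → α :=
  fun j => if h : 1 ≤ j ∧ j - 1 < r then x ((w ⟨j - 1, h.2⟩).val + 1) else x j

/-! ### Skew diagrams.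

The diagram of a weakly increasing `ζ ∈ ℕ^r` has rows `1, …, r` from top to
bottom (0-based `i` below), row `i` consisting of boxes in columns `1, …, ζ_i`;
the (shifted) content of the box in 0-based row `i` and 1-based column `j` is
`c(□) = i + j`. -/

/-- The box in 0-based row `i` and (1-based) column `j` belongs to `ζ/μ`. -/
def InSkew (ζ μ : List ℕ) (i j : ℕ) : Prop :=
  i < ζ.length ∧ μ.getD i 0 < j ∧ j ≤ ζ.getD i 0

/-- `μ ⊆ ζ` componentwise (same number of rows). -/
def IsSkew (ζ μ : List ℕ) : Prop :=
  μ.length = ζ.length ∧ ∀ i, i < ζ.length → μ.getD i 0 ≤ ζ.getD i 0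

/-- `ζ/μ` is a ribbon: it contains no `2 × 2` block of boxes. -/
def IsRibbon (ζ μ : List ℕ) : Prop :=
  IsSkew ζ μ ∧
    ¬ ∃ i j, InSkew ζ μ i j ∧ InSkew ζ μ i (j + 1) ∧
      InSkew ζ μ (i + 1) j ∧ InSkew ζ μ (i + 1) (j + 1)

/-- `ζ/μ` is a vertical strip: at most one box in each row. -/
def IsVStrip (ζ μ : List ℕ) : Prop :=
  IsSkew ζ μ ∧ ∀ i, i < ζ.length → ζ.getD i 0 ≤ μ.getD i 0 + 1

/-- `ζ/μ` is a horizontal strip: at most one box in each column. -/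
def IsHStrip (ζ μ : List ℕ) : Prop :=
  IsSkew ζ μ ∧ ∀ i j, InSkew ζ μ i j → ¬ InSkew ζ μ (i + 1) j

/-- `ψ^v(ζ/μ) = Π_{□ ∈ ζ/μ} y_{c(□)}`. -/
noncomputable def psiV (ζ μ : List ℕ) : Rpoly :=
  ∏ i ∈ Finset.range ζ.length, ∏ j ∈ Finset.Ioc (μ.getD i 0) (ζ.getD i 0), yP (i + j)

/-- `ψ^h(ζ/μ) = Π_{□ ∈ ζ/μ} (x - y_{c(□)})`. -/
noncomputable def psiH (ζ μ : List ℕ) (xv : Rpoly) : Rpoly :=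
  ∏ i ∈ Finset.range ζ.length, ∏ j ∈ Finset.Ioc (μ.getD i 0) (ζ.getD i 0), (xv - yP (i + j))

/-- The ribbon weight `θ(ζ/μ)`: a non-terminal box contributes `x - y_{c(□)}`;
a terminal box contributes `y_{c(□)}` if it lies directly above another box of
the ribbon, and `x` otherwise. -/
noncomputable def thetaW (ζ μ : List ℕ) (xv : Rpoly) : Rpoly :=
  ∏ i ∈ Finset.range ζ.length, ∏ j ∈ Finset.Ioc (μ.getD i 0) (ζ.getD i 0),
    if j < ζ.getD i 0 then xv - yP (i + j)
    else if i + 1 < ζ.length ∧ μ.getD (i + 1) 0 < j ∧ j ≤ ζ.getD (i + 1) 0 then yP (i + j)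
    else xv

/-! ### Complete functions of differences of alphabets, and multi-Schur functions. -/

/-- `S_m(A - B)`: the coefficient of `t^m` in `Π_{b ∈ B} (1 - t b) · Π_{a ∈ A} (1 - t a)⁻¹`
(zero for `m < 0`). -/
noncomputable def Scomp {K : Type*} [Field K] (m : ℤ) (A B : List K) : K :=
  if 0 ≤ m then
    PowerSeries.coeff m.toNat
      ((B.map (fun b => 1 - PowerSeries.C b * PowerSeries.X)).prod *
        ((A.map (fun a => 1 - PowerSeries.C a * PowerSeries.X)).prod)⁻¹)
  else 0

/-- The multi-Schur function
`S_{w/u'}(z - y₁, …, z - y_N // x₁, …, x_N) = det |S_{w_j - u'_i + j - i}(z + x_i - y_j)|`. -/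
noncomputable def multiSchur {K : Type*} [Field K] (N : ℕ) (w u' : ℕ → ℤ) (z : List K)
    (ys xs : ℕ → List K) : K :=
  Matrix.det (Matrix.of fun i j : Fin N =>
    Scomp (w j - u' i + ((j : ℕ) : ℤ) - ((i : ℕ) : ℤ)) (z ++ xs i) (ys j))

/-! ### `S_∞`: permutations of the positive integers with finite support. -/

/-- Permutations of the positive integers (modelled as permutations of `ℕ`
fixing `0`) fixing all but finitely many integers. -/
def SInfSet : Set (Equiv.Perm ℕ) := {σ | σ 0 = 0 ∧ {i | σ i ≠ i}.Finite}

/-- The least `n` such that `σ` fixes every `i ≥ n`. -/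
noncomputable def bnd (σ : Equiv.Perm ℕ) : ℕ := sInf {n | ∀ i, n ≤ i → σ i = i}

/-- The list `[σ 1, …, σ m]` of values of `σ` on the segment it permutes. -/
noncomputable def permList (σ : Equiv.Perm ℕ) : List ℕ :=
  (List.range (bnd σ - 1)).map (fun i => σ (i + 1))

/-- The divided difference `∂_σ` for `σ ∈ S_∞`, computed along a reduced word of `σ`. -/
noncomputable def ddPerm (σ : Equiv.Perm ℕ) (f : Rpoly) : Rpoly :=
  ddWord (sortWord (bnd σ * bnd σ) (permList σ)) f

/-- The specialization `x_i ↦ y_i` (for every `i`). -/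
noncomputable def specXY (f : Rpoly) : Rpoly :=
  MvPolynomial.aeval (Sum.elim (fun i => yP i) (fun i => yP i)) f

def etaOf (r : ℕ) (ζ : List ℕ) (S : Finset ℕ) : List ℕ :=
  (List.range r).map (fun i => if i ∈ S then ζ.getD i 0 - 1 else ζ.getD i 0)

lemma etaOf_length (r : ℕ) (ζ : List ℕ) (S : Finset ℕ) : (etaOf r ζ S).length = r := by
  simp [etaOf]

lemma etaOf_getD (r : ℕ) (ζ : List ℕ) (S : Finset ℕ) {i : ℕ} (hi : i < r) :
    (etaOf r ζ S).getD i 0 = if i ∈ S then ζ.getD i 0 - 1 else ζ.getD i 0 := by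
  rw [etaOf, List.getD_eq_getElem _ _ (by simpa using hi)]
  simp

lemma sorted_of_consec {l : List ℕ} (h : ∀ i, i + 1 < l.length → l.getD i 0 ≤ l.getD (i+1) 0) :
    l.Pairwise (· ≤ ·) := by
  rw [← List.isChain_iff_pairwise, List.isChain_iff_getElem]
  intro i hi
  have h2 : i + 1 < l.length := by omega
  have := h i h2
  rw [List.getD_eq_getElem _ _ (by omega), List.getD_eq_getElem _ _ h2] at this
  simpa using this

lemma consec_of_sorted {l : List ℕ} (h : l.Pairwise (· ≤ ·)) :
    ∀ i, i + 1 < l.length → l.getD i 0 ≤ l.getD (i+1) 0 := by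
  intro i hi
  rw [List.getD_eq_getElem _ _ (by omega), List.getD_eq_getElem _ _ hi]
  exact List.pairwise_iff_getElem.mp h i (i+1) (by omega) hi (by omega)

/-- for a ribbon `ζ/μ` (with `ζ ∈ ℕ^r`, `μ ∈ ℕ^{r-1}` weakly
increasing, `μ` padded with an initial `0` part),
`Σ_η ψ^v(ζ/η) · ψ^h(η/μ) = θ(ζ/μ)`, the sum over all `η` such that `ζ/η` is a
vertical strip and `η/μ` is a horizontal strip, `x` standing for `x_r`. -/
theorem ribbon_weight_decomposition (r : ℕ) (hr : 0 < r) (ζ μ : List ℕ)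
    (hζl : ζ.length = r) (hζs : ζ.Pairwise (· ≤ ·))
    (hμl : μ.length + 1 = r) (hμs : μ.Pairwise (· ≤ ·))
    (hrib : IsRibbon ζ (0 :: μ)) :
    (∑ᶠ η ∈ {η : List ℕ | η.length = r ∧ η.Pairwise (· ≤ ·) ∧
          IsVStrip ζ η ∧ IsHStrip η (0 :: μ)},
        psiV ζ η * psiH η (0 :: μ) (xP r))
      = thetaW ζ (0 :: μ) (xP r) := by
  classical
  set ν : List ℕ := 0 :: μ with hνdef
  have hνl : ν.length = r := by simp [hνdef]; omega
  have hνs : ν.Pairwise (· ≤ ·) := by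
    rw [hνdef, List.pairwise_cons]
    exact ⟨fun b _ => Nat.zero_le b, hμs⟩
  have hζm : ∀ i, i + 1 < r → ζ.getD i 0 ≤ ζ.getD (i+1) 0 := by
    intro i hi; exact consec_of_sorted hζs i (by omega)
  have hνm : ∀ i, i + 1 < r → ν.getD i 0 ≤ ν.getD (i+1) 0 := by
    intro i hi; exact consec_of_sorted hνs i (by omega)
  have hsub : ∀ i, i < r → ν.getD i 0 ≤ ζ.getD i 0 := by
    intro i hi; exact hrib.1.2 i (by omega)
  have hribc : ∀ i, i + 1 < r → ζ.getD i 0 ≤ ν.getD (i+1) 0 + 1 := by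
    intro i hi
    by_contra hc
    push_neg at hc
    have hm := hνm i hi
    have hz := hζm i hi
    exact hrib.2 ⟨i, ν.getD (i+1) 0 + 1,
      ⟨by omega, by omega, by omega⟩, ⟨by omega, by omega, by omega⟩,
      ⟨by omega, by omega, by omega⟩, ⟨by omega, by omega, by omega⟩⟩
  set Rs : Finset ℕ := (Finset.range r).filter (fun i => ν.getD i 0 < ζ.getD i 0) with hRsdef
  set Bs : Finset ℕ := Rs.filter (fun i => i + 1 < r ∧ ν.getD (i+1) 0 < ζ.getD i 0) with hBsdef
  set Ns : Finset ℕ := Rs \ Bs with hNsdef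
  have hRmem : ∀ i, i ∈ Rs ↔ i < r ∧ ν.getD i 0 < ζ.getD i 0 := by
    intro i; simp [hRsdef]
  have hBmem : ∀ i, i ∈ Bs ↔ i < r ∧ ν.getD i 0 < ζ.getD i 0 ∧ i + 1 < r ∧
      ν.getD (i+1) 0 < ζ.getD i 0 := by
    intro i; simp [hBsdef, hRsdef]; tauto
  have hNmem : ∀ i, i ∈ Ns ↔ i < r ∧ ν.getD i 0 < ζ.getD i 0 ∧
      ¬ (i + 1 < r ∧ ν.getD (i+1) 0 < ζ.getD i 0) := by
    intro i; simp [hNsdef, hBmem, hRmem]; tauto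
  have hNsub : Ns ⊆ Finset.range r := by
    intro i hi; rw [Finset.mem_range]; exact ((hNmem i).mp hi).1
  -- membership facts for S = Bs ∪ T with T ⊆ Ns
  have hSR : ∀ (T : Finset ℕ), T ⊆ Ns → ∀ i ∈ Bs ∪ T, i < r ∧ ν.getD i 0 < ζ.getD i 0 := by
    intro T hT i hi
    rcases Finset.mem_union.mp hi with h | h
    · have := (hBmem i).mp h; exact ⟨this.1, this.2.1⟩
    · have := (hNmem i).mp (hT h); exact ⟨this.1, this.2.1⟩
  -- value of eta
  have hEg : ∀ (S : Finset ℕ) {i : ℕ}, i < r →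
      (etaOf r ζ S).getD i 0 = if i ∈ S then ζ.getD i 0 - 1 else ζ.getD i 0 :=
    fun S _ hi => etaOf_getD r ζ S hi
  -- bound: eta_i ≤ ν_{i+1}
  have hbound : ∀ (T : Finset ℕ), T ⊆ Ns → ∀ i, i + 1 < r →
      (etaOf r ζ (Bs ∪ T)).getD i 0 ≤ ν.getD (i+1) 0 := by
    intro T hT i hi
    rw [hEg (Bs ∪ T) (by omega)]
    split_ifs with h
    · have := hribc i hi; omega
    · rcases Nat.lt_or_ge (ν.getD i 0) (ζ.getD i 0) with hlt | hge
      · -- i in Rs but not in Bs∪T, in particular not in Bs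
        have hnB : i ∉ Bs := fun hB => h (Finset.mem_union_left _ hB)
        rw [hBmem] at hnB
        push_neg at hnB
        have := hnB (by omega) hlt hi
        omega
      · have := hsub i (by omega)
        have := hνm i hi
        omega
  -- monotonicity of eta
  have hmono : ∀ (T : Finset ℕ), T ⊆ Ns → ∀ i, i + 1 < r →
      (etaOf r ζ (Bs ∪ T)).getD i 0 ≤ (etaOf r ζ (Bs ∪ T)).getD (i+1) 0 := by
    intro T hT i hi
    rw [hEg (Bs ∪ T) (by omega), hEg (Bs ∪ T) hi]
    have hz := hζm i hi
    split_ifs with h1 h2 h2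
    · omega
    · omega
    · -- i ∉ S, i+1 ∈ S : need ζ_i ≤ ζ_{i+1} - 1
      have h3 := (hSR T hT _ h2).2
      by_contra hc
      push_neg at hc
      -- so ζ_i = ζ_{i+1}, and ν_{i+1} < ζ_{i+1} = ζ_i
      rcases Nat.lt_or_ge (ν.getD i 0) (ζ.getD i 0) with hlt | hge
      · exact h1 (Finset.mem_union_left _ ((hBmem i).mpr ⟨by omega, hlt, hi, by omega⟩))
      · have := hνm i hi; have := hsub i (by omega); omega
    · omega

  -- forward/backward characterization of the admissible η
  have hsetEq : {η : List ℕ | η.length = r ∧ η.Pairwise (· ≤ ·) ∧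
        IsVStrip ζ η ∧ IsHStrip η ν}
      = ↑((Ns.powerset).image (fun T => etaOf r ζ (Bs ∪ T))) := by
    ext η
    simp only [Set.mem_setOf_eq, Finset.coe_image, Set.mem_image, Finset.mem_coe,
      Finset.mem_powerset]
    constructor
    · rintro ⟨hl, hs, hv, hh⟩
      refine ⟨Ns.filter (fun k => η.getD k 0 < ζ.getD k 0), Finset.filter_subset _ _, ?_⟩
      have hηm : ∀ i, i + 1 < r → η.getD i 0 ≤ η.getD (i+1) 0 := by
        intro i hi; exact consec_of_sorted hs i (by omega)
      have hv1 : ∀ i, i < r → η.getD i 0 ≤ ζ.getD i 0 := fun i hi => hv.1.2 i (by omega)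
      have hv2 : ∀ i, i < r → ζ.getD i 0 ≤ η.getD i 0 + 1 := fun i hi => hv.2 i (by omega)
      have hh1 : ∀ i, i < r → ν.getD i 0 ≤ η.getD i 0 := fun i hi => hh.1.2 i (by omega)
      have key : ∀ i, i < r → η.getD i 0
          = if i ∈ Bs ∪ Ns.filter (fun k => η.getD k 0 < ζ.getD k 0) then ζ.getD i 0 - 1
            else ζ.getD i 0 := by
        intro i hi
        by_cases hB : i ∈ Bs
        · rw [if_pos (Finset.mem_union_left _ hB)]
          rw [hBmem] at hB
          by_contra hc
          have hηi : η.getD i 0 = ζ.getD i 0 := by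
            have := hv1 i hi; have := hv2 i hi; omega
          have hmono2 := hηm i hB.2.2.1
          have hb1 := hB.2.1
          have hb2 := hB.2.2.2
          exact hh.2 i (ζ.getD i 0)
            ⟨by omega, by omega, by omega⟩
            ⟨by omega, by omega, by omega⟩
        · by_cases hR : i ∈ Rs
          · have hN : i ∈ Ns := Finset.mem_sdiff.mpr ⟨hR, hB⟩
            have hRlt := ((hRmem i).mp hR).2
            by_cases hlt : η.getD i 0 < ζ.getD i 0
            · have hmem : i ∈ Bs ∪ Ns.filter (fun k => η.getD k 0 < ζ.getD k 0) :=
                Finset.mem_union_right _ (Finset.mem_filter.mpr ⟨hN, hlt⟩)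
              rw [if_pos hmem]
              have := hv2 i hi; omega
            · rw [if_neg]
              · have := hv1 i hi; omega
              · intro hmem
                rcases Finset.mem_union.mp hmem with h | h
                · exact hB h
                · exact hlt (Finset.mem_filter.mp h).2
          · have hge : ζ.getD i 0 ≤ ν.getD i 0 := by
              by_contra hc; push_neg at hc
              exact hR ((hRmem i).mpr ⟨hi, hc⟩)
            rw [if_neg]
            · have := hh1 i hi; have := hv1 i hi; omega
            · intro hmem
              have := (hSR _ (Finset.filter_subset _ _) i hmem).2
              omega
      apply List.ext_getElem (by rw [etaOf_length, hl])
      intro n h1 h2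
      have hn : n < r := by rw [etaOf_length] at h1; exact h1
      rw [← List.getD_eq_getElem _ 0 h1, ← List.getD_eq_getElem _ 0 h2,
        hEg _ hn, key n hn]
    · rintro ⟨T, hT, rfl⟩
      have hl : (etaOf r ζ (Bs ∪ T)).length = r := etaOf_length _ _ _
      refine ⟨hl, ?_, ⟨⟨by rw [hl, hζl], ?_⟩, ?_⟩, ⟨⟨by rw [hl, hνl], ?_⟩, ?_⟩⟩
      · apply sorted_of_consec
        intro i hi
        rw [hl] at hi
        exact hmono T hT i hi
      · intro i hi
        rw [hζl] at hi
        rw [hEg _ hi]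
        split_ifs <;> [omega; exact le_refl _]
      · intro i hi
        rw [hζl] at hi
        rw [hEg _ hi]
        split_ifs with h
        · have := (hSR T hT i h).2; omega
        · omega
      · intro i hi
        rw [hl] at hi
        rw [hEg _ hi]
        split_ifs with h
        · have := (hSR T hT i h).2; omega
        · exact hsub i hi
      · intro i j h1 h2
        obtain ⟨hi2, hb2, hc2⟩ := h2
        obtain ⟨hi1a, hb1, hc1⟩ := h1
        rw [hl] at hi2
        have hb := hbound T hT i hi2
        omega
  -- injectivity of T ↦ η(T)
  have hinj : ∀ T1 ∈ Ns.powerset, ∀ T2 ∈ Ns.powerset,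
      etaOf r ζ (Bs ∪ T1) = etaOf r ζ (Bs ∪ T2) → T1 = T2 := by
    intro T1 h1 T2 h2 heq
    rw [Finset.mem_powerset] at h1 h2
    ext i
    by_cases hN : i ∈ Ns
    · have hi : i < r := ((hNmem i).mp hN).1
      have hpos := ((hNmem i).mp hN).2.1
      have hB : i ∉ Bs := (Finset.mem_sdiff.mp hN).2
      have hval := congrArg (fun l => l.getD i 0) heq
      simp only [hEg _ hi] at hval
      by_cases m1 : i ∈ T1 <;> by_cases m2 : i ∈ T2
      · simp [m1, m2]
      · have hn2 : i ∉ Bs ∪ T2 := fun h => by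
          rcases Finset.mem_union.mp h with h | h
          · exact hB h
          · exact m2 h
        rw [if_pos (Finset.mem_union_right _ m1), if_neg hn2] at hval
        omega
      · have hn1 : i ∉ Bs ∪ T1 := fun h => by
          rcases Finset.mem_union.mp h with h | h
          · exact hB h
          · exact m1 h
        rw [if_neg hn1, if_pos (Finset.mem_union_right _ m2)] at hval
        omega
      · simp [m1, m2]
    · have e1 : i ∉ T1 := fun h => hN (h1 h)
      have e2 : i ∉ T2 := fun h => hN (h2 h)
      simp [e1, e2]
  -- product computations
  have hsubr : ∀ T, T ⊆ Ns → Bs ∪ T ⊆ Finset.range r := by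
    intro T hT i hi
    exact Finset.mem_range.mpr (hSR T hT i hi).1
  have hpsiV : ∀ T, T ⊆ Ns → psiV ζ (etaOf r ζ (Bs ∪ T))
      = ∏ i ∈ Bs ∪ T, yP (i + ζ.getD i 0) := by
    intro T hT
    have step : ∀ i ∈ Finset.range r,
        (∏ j ∈ Finset.Ioc ((etaOf r ζ (Bs ∪ T)).getD i 0) (ζ.getD i 0), yP (i + j))
        = (if i ∈ Bs ∪ T then yP (i + ζ.getD i 0) else 1) := by
      intro i hi
      rw [Finset.mem_range] at hi
      by_cases hS : i ∈ Bs ∪ T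
      · have hpos := (hSR T hT i hS).2
        rw [hEg _ hi, if_pos hS, if_pos hS,
          show Finset.Ioc (ζ.getD i 0 - 1) (ζ.getD i 0) = {ζ.getD i 0} from
            Finset.ext fun x => by simp only [Finset.mem_Ioc, Finset.mem_singleton]; omega]
        simp
      · rw [hEg _ hi, if_neg hS, if_neg hS, Finset.Ioc_self, Finset.prod_empty]
    rw [psiV, hζl, Finset.prod_congr rfl step, Finset.prod_ite_mem,
      Finset.inter_eq_right.mpr (hsubr T hT)]
  have hNdiff : ∀ T, T ⊆ Ns → ∀ i, i ∈ Ns \ T ↔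
      (i < r ∧ ν.getD i 0 < ζ.getD i 0 ∧ i ∉ Bs ∪ T) := by
    intro T hT i
    constructor
    · intro h
      have h1 := Finset.mem_sdiff.mp h
      have h2 := (hNmem i).mp h1.1
      refine ⟨h2.1, h2.2.1, ?_⟩
      intro hm
      rcases Finset.mem_union.mp hm with hB | hTT
      · exact (Finset.mem_sdiff.mp h1.1).2 hB
      · exact h1.2 hTT
    · rintro ⟨hi, hlt, hm⟩
      refine Finset.mem_sdiff.mpr ⟨Finset.mem_sdiff.mpr ⟨(hRmem i).mpr ⟨hi, hlt⟩, ?_⟩, ?_⟩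
      · exact fun h => hm (Finset.mem_union_left _ h)
      · exact fun h => hm (Finset.mem_union_right _ h)
  have hpsiH : ∀ T, T ⊆ Ns → psiH (etaOf r ζ (Bs ∪ T)) ν (xP r)
      = (∏ i ∈ Finset.range r, ∏ j ∈ Finset.Ioo (ν.getD i 0) (ζ.getD i 0),
          (xP r - yP (i + j)))
        * ∏ i ∈ Ns \ T, (xP r - yP (i + ζ.getD i 0)) := by
    intro T hT
    have step : ∀ i ∈ Finset.range r,
        (∏ j ∈ Finset.Ioc (ν.getD i 0) ((etaOf r ζ (Bs ∪ T)).getD i 0), (xP r - yP (i + j)))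
        = (∏ j ∈ Finset.Ioo (ν.getD i 0) (ζ.getD i 0), (xP r - yP (i + j)))
          * (if i ∈ Ns \ T then (xP r - yP (i + ζ.getD i 0)) else 1) := by
      intro i hi
      rw [Finset.mem_range] at hi
      by_cases hS : i ∈ Bs ∪ T
      · have hpos := (hSR T hT i hS).2
        have hNS : i ∉ Ns \ T := fun h => ((hNdiff T hT i).mp h).2.2 hS
        rw [hEg _ hi, if_pos hS, if_neg hNS, mul_one]
        apply Finset.prod_congr _ (fun _ _ => rfl)
        exact Finset.ext fun x => by
          simp only [Finset.mem_Ioc, Finset.mem_Ioo]; omega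
      · rw [hEg _ hi, if_neg hS]
        by_cases hR : ν.getD i 0 < ζ.getD i 0
        · have hNS : i ∈ Ns \ T := (hNdiff T hT i).mpr ⟨hi, hR, hS⟩
          rw [if_pos hNS, ← Finset.Ioo_insert_right hR,
            Finset.prod_insert (by simp)]
          ring
        · have hEq : ν.getD i 0 = ζ.getD i 0 := le_antisymm (hsub i hi) (by omega)
          have hNS : i ∉ Ns \ T := fun h => hR ((hNdiff T hT i).mp h).2.1
          rw [if_neg hNS, mul_one, hEq, Finset.Ioc_self, Finset.Ioo_self]
    rw [psiH, etaOf_length, Finset.prod_congr rfl step, Finset.prod_mul_distrib]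
    congr 1
    have : ∀ i ∈ Finset.range r,
        (if i ∈ Ns \ T then (xP r - yP (i + ζ.getD i 0)) else 1)
        = (if i ∈ Ns \ T then (xP r - yP (i + ζ.getD i 0)) else 1) := fun _ _ => rfl
    rw [Finset.prod_ite_mem, Finset.inter_eq_right.mpr]
    intro i hin
    exact Finset.mem_range.mpr ((hNdiff T hT i).mp hin).1
  -- the theta side
  have htheta : thetaW ζ ν (xP r)
      = (∏ i ∈ Finset.range r, ∏ j ∈ Finset.Ioo (ν.getD i 0) (ζ.getD i 0),
          (xP r - yP (i + j)))
        * ((∏ i ∈ Bs, yP (i + ζ.getD i 0)) * ∏ i ∈ Ns, xP r) := by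
    have step : ∀ i ∈ Finset.range r,
        (∏ j ∈ Finset.Ioc (ν.getD i 0) (ζ.getD i 0),
          if j < ζ.getD i 0 then xP r - yP (i + j)
          else if i + 1 < r ∧ ν.getD (i + 1) 0 < j ∧ j ≤ ζ.getD (i + 1) 0 then yP (i + j)
          else xP r)
        = (∏ j ∈ Finset.Ioo (ν.getD i 0) (ζ.getD i 0), (xP r - yP (i + j)))
          * ((if i ∈ Bs then yP (i + ζ.getD i 0) else 1)
            * (if i ∈ Ns then xP r else 1)) := by
      intro i hi
      rw [Finset.mem_range] at hi
      by_cases hR : ν.getD i 0 < ζ.getD i 0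
      · rw [← Finset.Ioo_insert_right hR, Finset.prod_insert (by simp)]
        have hterm : (if ζ.getD i 0 < ζ.getD i 0 then xP r - yP (i + ζ.getD i 0)
            else if i + 1 < r ∧ ν.getD (i + 1) 0 < ζ.getD i 0 ∧ ζ.getD i 0 ≤ ζ.getD (i + 1) 0
              then yP (i + ζ.getD i 0) else xP r)
            = ((if i ∈ Bs then yP (i + ζ.getD i 0) else 1) * (if i ∈ Ns then xP r else 1)) := by
          rw [if_neg (lt_irrefl _)]
          by_cases hB : i ∈ Bs
          · have hBB := (hBmem i).mp hB
            have hNN : i ∉ Ns := fun h => (Finset.mem_sdiff.mp h).2 hB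
            rw [if_pos ⟨hBB.2.2.1, hBB.2.2.2, hζm i hBB.2.2.1⟩, if_pos hB, if_neg hNN, mul_one]
          · have hNN : i ∈ Ns := Finset.mem_sdiff.mpr ⟨(hRmem i).mpr ⟨hi, hR⟩, hB⟩
            rw [if_neg, if_neg hB, if_pos hNN, one_mul]
            rintro ⟨ha, hb, hc⟩
            exact hB ((hBmem i).mpr ⟨hi, hR, ha, hb⟩)
        rw [hterm, Finset.prod_congr rfl (fun j hj => ?_), mul_comm]
        rw [Finset.mem_Ioo] at hj
        rw [if_pos hj.2]
      · have hEq : ν.getD i 0 = ζ.getD i 0 := le_antisymm (hsub i hi) (by omega)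
        have hB : i ∉ Bs := by
          intro h; exact hR ((hBmem i).mp h).2.1
        have hN : i ∉ Ns := by
          intro h; exact hR ((hNmem i).mp h).2.1
        rw [hEq, Finset.Ioc_self, Finset.Ioo_self, if_neg hB, if_neg hN]
        simp
      done
    rw [thetaW, hζl, Finset.prod_congr rfl step, Finset.prod_mul_distrib,
      Finset.prod_mul_distrib, Finset.prod_ite_mem, Finset.prod_ite_mem,
      Finset.inter_eq_right.mpr, Finset.inter_eq_right.mpr hNsub]
    intro i hiB
    rw [Finset.mem_range]
    exact ((hBmem i).mp hiB).1
  -- assemble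
  have hdisj : ∀ T, T ⊆ Ns → Disjoint Bs T := by
    intro T hT
    rw [Finset.disjoint_left]
    intro a haB haT
    exact (Finset.mem_sdiff.mp (hT haT)).2 haB
  rw [hsetEq, finsum_mem_coe_finset, Finset.sum_image hinj, htheta]
  have hterm : ∀ T ∈ Ns.powerset,
      psiV ζ (etaOf r ζ (Bs ∪ T)) * psiH (etaOf r ζ (Bs ∪ T)) ν (xP r)
      = ((∏ i ∈ Finset.range r, ∏ j ∈ Finset.Ioo (ν.getD i 0) (ζ.getD i 0),
            (xP r - yP (i + j))) * ∏ i ∈ Bs, yP (i + ζ.getD i 0))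
        * ((∏ i ∈ T, yP (i + ζ.getD i 0))
            * ∏ i ∈ Ns \ T, (xP r - yP (i + ζ.getD i 0))) := by
    intro T hT
    rw [Finset.mem_powerset] at hT
    rw [hpsiV T hT, hpsiH T hT, Finset.prod_union (hdisj T hT)]
    ring
  rw [Finset.sum_congr rfl hterm, ← Finset.mul_sum,
    ← Finset.prod_add (fun i => yP (i + ζ.getD i 0))
      (fun i => xP r - yP (i + ζ.getD i 0)) Ns]
  have : (∏ i ∈ Ns, (yP (i + ζ.getD i 0) + (xP r - yP (i + ζ.getD i 0))))
      = ∏ i ∈ Ns, xP r := Finset.prod_congr rfl fun i _ => by ring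
  rw [this]
  ring
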